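/- Let (A,m) be a commutative Noetherian local ring and let X be a bounded complex of finitely generated free A-modules. Suppose that for every endomorphism u of X in the homotopy category K^b(proj A) and every r ∈ m there exists n with r^n u = 0 (i.e., the endomorphism ring of X is m-power torsion). Then every cohomology module H^i(X) has finite length. -/

import Mathlib

open CategoryTheory Limits

section Algebra

variable {A : Type} [CommRing A]

theorem aux_isArtinian_of_quotient (I : Ideal A) (M : Type) [AddCommGroup M]
    [Module A M] (hM : Module.IsTorsionBySet A M I)
    (h : letI := hM.module; IsArtinian (A ⧸ I) M) : IsArtinian A M := by
  letI := hM.module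
  let f : Submodule A M → Submodule (A ⧸ I) M := fun N =>
    { carrier := N
      add_mem' := fun ha hb => N.add_mem ha hb
      zero_mem' := N.zero_mem
      smul_mem' := by
        rintro c x hx
        obtain ⟨r, rfl⟩ := Ideal.Quotient.mk_surjective c
        rw [hM.mk_smul]
        exact N.smul_mem r hx }
  have hmono : ∀ {N N' : Submodule A M}, N < N' → f N < f N' := by
    intro N N' hNN'
    rw [SetLike.lt_iff_le_and_exists] at hNN' ⊢
    exact ⟨fun x hx => hNN'.1 hx, hNN'.2⟩
  exact ⟨Subrelation.wf (fun {N N'} hlt => hmono hlt) (InvImage.wf f h.wf)⟩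

theorem aux_isArtinian_res [IsNoetherianRing A] [IsLocalRing A]
    (M : Type) [AddCommGroup M] [Module A M] [Module.Finite A M]
    (h : ∀ (x : M), ∀ r ∈ IsLocalRing.maximalIdeal A, r • x = 0) : IsArtinian A M := by
  have hM : Module.IsTorsionBySet A M (IsLocalRing.maximalIdeal A) :=
    fun x r => h x r r.2
  apply aux_isArtinian_of_quotient _ M hM
  letI := hM.module
  letI : Field (A ⧸ IsLocalRing.maximalIdeal A) :=
    Ideal.Quotient.field (IsLocalRing.maximalIdeal A)
  haveI : IsScalarTower A (A ⧸ IsLocalRing.maximalIdeal A) M := hM.isScalarTower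
  haveI : Module.Finite (A ⧸ IsLocalRing.maximalIdeal A) M :=
    Module.Finite.of_restrictScalars_finite A (A ⧸ IsLocalRing.maximalIdeal A) M
  exact isArtinian_of_fg_of_artinian'

theorem aux_isArtinian_pow [IsNoetherianRing A] [IsLocalRing A] :
    ∀ (N : ℕ) (M : Type) [AddCommGroup M] [Module A M] [Module.Finite A M],
      (∀ (x : M), ∀ r ∈ (IsLocalRing.maximalIdeal A) ^ N, r • x = 0) → IsArtinian A M := by
  intro N
  induction N with
  | zero =>
    intro M _ _ _ h
    haveI : Subsingleton M := ⟨fun x y => by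
      have hx := h x 1 (by simp [Ideal.one_eq_top])
      have hy := h y 1 (by simp [Ideal.one_eq_top])
      rw [one_smul] at hx hy
      rw [hx, hy]⟩
    infer_instance
  | succ N ih =>
    intro M _ _ _ h
    set m := IsLocalRing.maximalIdeal A with hm
    set S : Submodule A M := m • ⊤ with hS
    haveI : IsNoetherian A M := isNoetherian_of_isNoetherianRing_of_finite A M
    have hzero : ∀ z ∈ S, ∀ r ∈ m ^ N, r • z = (0 : M) := by
      intro z hz r hr
      refine Submodule.smul_induction_on hz (fun a ha y _ => ?_) (fun y w hy hw => ?_)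
      · rw [smul_smul]
        exact h y (r * a) (by rw [pow_succ]; exact Ideal.mul_mem_mul hr ha)
      · rw [smul_add, hy, hw, add_zero]
    haveI hq : IsArtinian A (M ⧸ S) := by
      apply aux_isArtinian_res
      intro x r hr
      obtain ⟨y, rfl⟩ := Submodule.Quotient.mk_surjective S x
      rw [← Submodule.Quotient.mk_smul, Submodule.Quotient.mk_eq_zero]
      exact Submodule.smul_mem_smul hr Submodule.mem_top
    haveI hs : IsArtinian A S := by
      apply ih
      intro x r hr
      exact Subtype.ext (hzero x x.2 r hr)
    exact isArtinian_of_range_eq_ker S.subtype S.mkQ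
      (by rw [Submodule.range_subtype, Submodule.ker_mkQ])

theorem aux_isFiniteLength [IsNoetherianRing A] [IsLocalRing A]
    (M : Type) [AddCommGroup M] [Module A M] [Module.Finite A M]
    (h : ∀ r ∈ IsLocalRing.maximalIdeal A, ∃ n : ℕ, ∀ x : M, r ^ n • x = 0) :
    IsFiniteLength A M := by
  rw [isFiniteLength_iff_isNoetherian_isArtinian]
  haveI : IsNoetherian A M := isNoetherian_of_isNoetherianRing_of_finite A M
  refine ⟨inferInstance, ?_⟩
  have hrad : IsLocalRing.maximalIdeal A ≤ (Module.annihilator A M).radical := by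
    intro r hr
    obtain ⟨n, hn⟩ := h r hr
    exact ⟨n, Module.mem_annihilator.mpr hn⟩
  obtain ⟨k, hk⟩ := Ideal.exists_pow_le_of_le_radical_of_fg_radical hrad
    (IsNoetherian.noetherian _)
  exact aux_isArtinian_pow k M fun x r hr => Module.mem_annihilator.mp (hk hr) x

end Algebra

section Homological

variable {A : Type} [CommRing A]

lemma aux_homologyMap_smul {K L : CochainComplex (ModuleCat.{0} A) ℤ} (f : K ⟶ L) (r : A)
    (i : ℤ) :
    HomologicalComplex.homologyMap (r • f) i = r • HomologicalComplex.homologyMap f i := by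
  have hmap : (HomologicalComplex.shortComplexFunctor (ModuleCat.{0} A)
        (ComplexShape.up ℤ) i).map (r • f)
      = r • (HomologicalComplex.shortComplexFunctor (ModuleCat.{0} A)
        (ComplexShape.up ℤ) i).map f := by
    ext <;> rfl
  dsimp only [HomologicalComplex.homologyMap]
  rw [hmap, CategoryTheory.ShortComplex.homologyMap_smul]
  rfl

lemma aux_homology_smul_eq_zero (X : CochainComplex (ModuleCat.{0} A) ℤ) (r : A) (n : ℕ) (i : ℤ)
    (hn : (r ^ n) • (𝟙 ((HomotopyCategory.quotient (ModuleCat.{0} A)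
      (ComplexShape.up ℤ)).obj X)) = 0) :
    ∀ x : X.homology i, (r ^ n) • x = 0 := by
  intro x
  have h1 : (HomotopyCategory.quotient (ModuleCat.{0} A) (ComplexShape.up ℤ)).map
      ((r ^ n) • 𝟙 X) = (HomotopyCategory.quotient (ModuleCat.{0} A)
      (ComplexShape.up ℤ)).map 0 := by
    rw [Functor.map_smul, Functor.map_zero, CategoryTheory.Functor.map_id]
    exact hn
  have h2 := (HomotopyCategory.homotopyOfEq _ _ h1).homologyMap_eq i
  rw [HomologicalComplex.homologyMap_zero, aux_homologyMap_smul,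
    HomologicalComplex.homologyMap_id] at h2
  calc (r ^ n) • x = ((r ^ n) • 𝟙 (X.homology i)) x := rfl
    _ = (0 : X.homology i ⟶ X.homology i) x := by rw [h2]
    _ = 0 := rfl

lemma aux_homology_finite (X : CochainComplex (ModuleCat.{0} A) ℤ) [IsNoetherianRing A]
    (hfg : ∀ i : ℤ, Module.Finite A (X.X i)) (i : ℤ) :
    Module.Finite A (X.homology i) := by
  haveI := hfg i
  haveI : IsNoetherian A (X.X i) := isNoetherian_of_isNoetherianRing_of_finite A _
  haveI : IsNoetherian A (X.cycles i) :=
    isNoetherian_of_injective (X.iCycles i).hom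
      ((ModuleCat.mono_iff_injective _).mp inferInstance)
  exact Module.Finite.of_surjective (X.homologyπ i).hom
    ((ModuleCat.epi_iff_surjective _).mp inferInstance)

end Homological


/-- Let `(A, m)` be a commutative Noetherian local ring and `X` a bounded
complex of finitely generated free `A`-modules. If every endomorphism `u` of `X` in the
homotopy category `K^b(proj A)` is `m`-power torsion (for every `r ∈ m` there is `n` with
`r ^ n • u = 0`), then every cohomology module of `X` has finite length. -/
theorem finite_length_cohomology_of_torsion_endomorphisms
    (A : Type) [CommRing A] [IsNoetherianRing A] [IsLocalRing A]
    (X : CochainComplex (ModuleCat.{0} A) ℤ)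
    (hbdd : ∃ a b : ℤ, ∀ i : ℤ, (i < a ∨ b < i) → IsZero (X.X i))
    (hfg : ∀ i : ℤ, Module.Finite A (X.X i))
    (hfree : ∀ i : ℤ, Module.Free A (X.X i))
    (htor : ∀ u : ((HomotopyCategory.quotient (ModuleCat.{0} A) (ComplexShape.up ℤ)).obj X ⟶
        (HomotopyCategory.quotient (ModuleCat.{0} A) (ComplexShape.up ℤ)).obj X),
      ∀ r ∈ IsLocalRing.maximalIdeal A, ∃ n : ℕ, (r ^ n) • u = 0) :
    ∀ i : ℤ, IsFiniteLength A (X.homology i) := by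
  intro i
  haveI : Module.Finite A (X.homology i) := aux_homology_finite X hfg i
  apply aux_isFiniteLength
  intro r hr
  obtain ⟨n, hn⟩ := htor (𝟙 _) r hr
  exact ⟨n, aux_homology_smul_eq_zero X r n i hn⟩
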